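/- Let R be a ring every prime factor ring of which embeds in a matrix ring over a division ring (e.g., R a PI-ring). If a ∈ R satisfies aⁿ = aⁿ⁺¹x for some n ≥ 1 and x ∈ R, then there exists y ∈ R with aⁿ = yaⁿ⁺¹. -/

import Mathlib

open Matrix Module in
private lemma sp_matrix_left_of_right {D : Type*} [DivisionRing D] {k : ℕ}
    (b c : Matrix (Fin k) (Fin k) D) (n : ℕ) (hb : b ^ n = b ^ (n + 1) * c) :
    ∃ z : Matrix (Fin k) (Fin k) D, b ^ n = z * b ^ (n + 1) := by
  set p : Submodule D (Fin k → D) := LinearMap.range (b ^ n).vecMulLinear with hp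
  set q : Submodule D (Fin k → D) := LinearMap.range (b ^ (n+1)).vecMulLinear with hq
  have hqp : q ≤ p := by
    rintro _ ⟨v, rfl⟩
    refine ⟨v ᵥ* b, ?_⟩
    simp [pow_succ', vecMul_vecMul]
  have hrank : finrank D p ≤ finrank D q := by
    have hle : p ≤ q.map c.vecMulLinear := by
      rintro _ ⟨v, rfl⟩
      exact ⟨v ᵥ* b ^ (n+1), ⟨v, rfl⟩, by
        simp only [Matrix.vecMulLinear_apply, vecMul_vecMul, ← hb]⟩
    calc finrank D p ≤ finrank D (q.map c.vecMulLinear) := Submodule.finrank_mono hle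
      _ ≤ finrank D q := Submodule.finrank_map_le _ _
  have hpq : q = p := Submodule.eq_of_le_of_finrank_le hqp hrank
  have hrow : ∀ i : Fin k, ∃ w : Fin k → D, w ᵥ* (b ^ (n+1)) = (b ^ n) i := by
    intro i
    have h1 : (b ^ n) i ∈ p := ⟨Pi.single i 1, by simp [Matrix.single_one_vecMul]; rfl⟩
    rw [← hpq] at h1
    obtain ⟨w, hw⟩ := h1
    exact ⟨w, hw⟩
  choose w hw using hrow
  refine ⟨Matrix.of w, ?_⟩
  ext i j
  have h2 := congrFun (hw i) j
  simpa [Matrix.mul_apply, Matrix.vecMul, dotProduct] using h2.symm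

private lemma sp_id1 {R : Type*} [Ring R] (A B X y₁ y₂ : R) :
    (A - y₁*B) * (A - y₂*B) * X
      = A*A*X - y₁*(B*A*X) - ((A - y₁*B)*y₂)*(B*X) := by noncomm_ring

private lemma sp_id2 {R : Type*} [Ring R] (A B Y m₁ y₁ y₂ : R) :
    (A - y₁*B) - (A - y₁*B - m₁)*y₂*(A*Y)
      = ((A - y₁*B) - (A - y₁*B)*y₂*(A*Y)) + m₁*(y₂*(A*Y)) := by noncomm_ring

/-- If every prime factor ring of `R` embeds in a matrix ring over a division
ring (e.g. `R` a PI-ring, by Posner's theorem), then every right strongly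
π-regular element of `R` is (left, hence) strongly π-regular. -/
theorem stmt_9 {R : Type u} [Ring R]
    (h : ∀ P : TwoSidedIdeal R, P ≠ ⊤ →
      (∀ I J : TwoSidedIdeal R, (∀ i ∈ I, ∀ j ∈ J, i * j ∈ P) → I ≤ P ∨ J ≤ P) →
      ∃ (k : ℕ) (D : Type u) (_ : DivisionRing D)
        (f : P.ringCon.Quotient →+* Matrix (Fin k) (Fin k) D),
        Function.Injective f)
    (a x : R) (n : ℕ) (hn : 0 < n) (ha : a ^ n = a ^ (n + 1) * x) :
    ∃ y : R, a ^ n = y * a ^ (n + 1) := by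
  by_contra hcon
  push_neg at hcon
  -- basic power manipulation lemmas
  have hstep : ∀ m, n ≤ m → a ^ m = a ^ (m + 1) * x := by
    intro m hm
    obtain ⟨j, rfl⟩ := Nat.exists_eq_add_of_le hm
    calc a ^ (n + j) = a ^ j * a ^ n := by rw [add_comm, pow_add]
      _ = a ^ j * (a ^ (n+1) * x) := by rw [ha]
      _ = (a ^ j * a ^ (n+1)) * x := by rw [mul_assoc]
      _ = a ^ (n + j + 1) * x := by rw [← pow_add, show j + (n+1) = n + j + 1 by omega]
  have hred : ∀ m k, n ≤ m → a ^ (m + k) * x ^ k = a ^ m := by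
    intro m k hm
    induction k with
    | zero => simp
    | succ k ih =>
        calc a ^ (m + (k+1)) * x ^ (k+1)
            = (a ^ (m + k + 1) * x) * x ^ k := by
              rw [pow_succ' x k, show m + (k+1) = m + k + 1 by omega, mul_assoc]
          _ = a ^ (m + k) * x ^ k := by rw [← hstep (m+k) (by omega)]
          _ = a ^ m := ih
  -- the predicate: `I` contains a witness of left π-regularity
  set Pp : TwoSidedIdeal R → Prop :=
    fun I => ∃ y, a ^ n - y * a ^ (n + 1) ∈ I with hPp
  set S : Set (TwoSidedIdeal R) := {I | ¬ Pp I} with hS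
  have hbot : (⊥ : TwoSidedIdeal R) ∈ S := by
    rintro ⟨y, hy⟩
    rw [TwoSidedIdeal.mem_bot, sub_eq_zero] at hy
    exact hcon y hy
  -- Zorn's lemma
  have hchainbd : ∀ c ⊆ S, IsChain (· ≤ ·) c → ∀ y₀ ∈ c,
      ∃ ub ∈ S, ∀ z ∈ c, z ≤ ub := by
    intro c hcS hchain y₀ hy₀
    have h0 : (0 : R) ∈ ⋃ I ∈ c, (I : Set R) :=
      Set.mem_biUnion hy₀ (zero_mem y₀)
    have hadd : ∀ {u v : R}, u ∈ ⋃ I ∈ c, (I : Set R) → v ∈ ⋃ I ∈ c, (I : Set R) →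
        u + v ∈ ⋃ I ∈ c, (I : Set R) := by
      intro u v hu hv
      obtain ⟨I, hIc, hI⟩ := Set.mem_iUnion₂.1 hu
      obtain ⟨J, hJc, hJ⟩ := Set.mem_iUnion₂.1 hv
      rcases hchain.total hIc hJc with hIJ | hJI
      · exact Set.mem_biUnion hJc (add_mem (hIJ hI) hJ)
      · exact Set.mem_biUnion hIc (add_mem hI (hJI hJ))
    have hneg : ∀ {u : R}, u ∈ ⋃ I ∈ c, (I : Set R) → -u ∈ ⋃ I ∈ c, (I : Set R) := by
      intro u hu
      obtain ⟨I, hIc, hI⟩ := Set.mem_iUnion₂.1 hu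
      exact Set.mem_biUnion hIc (neg_mem hI)
    have hml : ∀ {r u : R}, u ∈ ⋃ I ∈ c, (I : Set R) → r * u ∈ ⋃ I ∈ c, (I : Set R) := by
      intro r u hu
      obtain ⟨I, hIc, hI⟩ := Set.mem_iUnion₂.1 hu
      exact Set.mem_biUnion hIc (I.mul_mem_left r u hI)
    have hmr : ∀ {u r : R}, u ∈ ⋃ I ∈ c, (I : Set R) → u * r ∈ ⋃ I ∈ c, (I : Set R) := by
      intro u r hu
      obtain ⟨I, hIc, hI⟩ := Set.mem_iUnion₂.1 hu
      exact Set.mem_biUnion hIc (I.mul_mem_right u r hI)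
    refine ⟨TwoSidedIdeal.mk' (⋃ I ∈ c, (I : Set R)) h0 hadd hneg hml hmr, ?_, ?_⟩
    · rintro ⟨y, hy⟩
      rw [TwoSidedIdeal.mem_mk'] at hy
      obtain ⟨I, hIc, hI⟩ := Set.mem_iUnion₂.1 hy
      exact hcS hIc ⟨y, hI⟩
    · intro z hz w hw
      rw [TwoSidedIdeal.mem_mk']
      exact Set.mem_biUnion hz hw
  obtain ⟨M, -, hMmax⟩ := zorn_le_nonempty₀ S hchainbd ⊥ hbot
  have hM : ¬ Pp M := hMmax.1
  -- M is not the whole ring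
  have hMne : M ≠ ⊤ := by
    intro e
    exact hM ⟨0, by rw [e]; exact TwoSidedIdeal.mem_top R⟩
  -- M is prime
  have hMpr : ∀ I J : TwoSidedIdeal R, (∀ i ∈ I, ∀ j ∈ J, i * j ∈ M) → I ≤ M ∨ J ≤ M := by
    intro I J hIJ
    by_contra hc2
    push_neg at hc2
    obtain ⟨hI, hJ⟩ := hc2
    have hPI : Pp (M ⊔ I) := by
      by_contra hp
      exact hI ((le_sup_right : I ≤ M ⊔ I).trans (hMmax.2 hp le_sup_left))
    have hPJ : Pp (M ⊔ J) := by
      by_contra hp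
      exact hJ ((le_sup_right : J ≤ M ⊔ J).trans (hMmax.2 hp le_sup_left))
    obtain ⟨y₁, h₁⟩ := hPI
    obtain ⟨y₂, h₂⟩ := hPJ
    rw [TwoSidedIdeal.mem_sup] at h₁ h₂
    obtain ⟨m₁, hm₁, α, hα, hsum₁⟩ := h₁
    obtain ⟨m₂, hm₂, β, hβ, hsum₂⟩ := h₂
    have hαeq : α = a ^ n - y₁ * a ^ (n+1) - m₁ := by rw [← hsum₁]; abel
    have hβeq : β = a ^ n - y₂ * a ^ (n+1) - m₂ := by rw [← hsum₂]; abel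
    -- key step lemma
    have hL : ∀ r : R, α * r * a ^ n - α * (r * y₂) * a ^ (n+1) ∈ M := by
      intro r
      have e : α * r * a ^ n - α * (r * y₂) * a ^ (n+1)
          = α * r * β + (α * r) * m₂ := by rw [hβeq]; noncomm_ring
      rw [e]
      exact add_mem (hIJ _ (I.mul_mem_right _ r hα) _ hβ)
        (M.mul_mem_left (α * r) m₂ hm₂)
    have hLk : ∀ k : ℕ, ∀ r : R, ∃ s : R, α * r * a ^ n - α * s * a ^ (n + k) ∈ M := by
      intro k
      induction k with
      | zero => exact fun r => ⟨r, by simp⟩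
      | succ k ih =>
          intro r
          obtain ⟨s, hs⟩ := ih r
          refine ⟨s * y₂, ?_⟩
          have h2 := M.mul_mem_right _ (a ^ k) (hL s)
          have e : α * r * a ^ n - α * (s * y₂) * a ^ (n + (k+1))
              = (α * r * a ^ n - α * s * a ^ (n + k))
                + (α * s * a ^ n - α * (s * y₂) * a ^ (n+1)) * a ^ k := by
            rw [pow_add a n k, show n + (k+1) = (n+1) + k by omega, pow_add a (n+1) k]
            noncomm_ring
          rw [e]
          exact add_mem hs h2
    -- the product of the two witnesses lies in M
    have hαβ1 : α * β ∈ M := hIJ _ hα _ hβ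
    have hprod : (a^n - y₁ * a^(n+1)) * (a^n - y₂ * a^(n+1)) ∈ M := by
      have e : (a^n - y₁ * a^(n+1)) * (a^n - y₂ * a^(n+1))
          = m₁ * (m₂ + β) + α * m₂ + α * β := by rw [← hsum₁, ← hsum₂]; noncomm_ring
      rw [e]
      exact add_mem (add_mem (M.mul_mem_right _ _ hm₁) (M.mul_mem_left _ _ hm₂)) hαβ1
    -- n = ν + 1
    obtain ⟨ν, rfl⟩ : ∃ ν, n = ν + 1 := ⟨n - 1, (Nat.succ_pred_eq_of_pos hn).symm⟩
    set nn := ν + 1 with hnn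
    -- power reduction facts
    have f1 : a ^ nn * a ^ nn * x ^ nn = a ^ nn := by
      rw [← pow_add]; exact hred nn nn le_rfl
    have f2 : a ^ (nn+1) * a ^ nn * x ^ nn = a ^ (nn+1) := by
      rw [← pow_add]; exact hred (nn+1) nn (by omega)
    have f3 : a ^ (nn+1) * x ^ nn = a ^ nn * x ^ ν := by
      rw [show nn = ν + 1 from rfl, pow_succ' x ν, ← mul_assoc, ← hstep (ν+1) le_rfl]
    have f4 : a ^ (nn + nn) * x ^ ν = a ^ (nn + 1) := by
      rw [show nn + nn = (nn+1) + ν by omega]; exact hred (nn+1) ν (by omega)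
    -- main computation
    have E1 : (a^nn - y₁ * a^(nn+1)) * (a^nn - y₂ * a^(nn+1)) * x ^ nn ∈ M :=
      M.mul_mem_right _ _ hprod
    have eW : (a^nn - y₁ * a^(nn+1)) * (a^nn - y₂ * a^(nn+1)) * x ^ nn
        = (a^nn - y₁ * a^(nn+1)) - (a^nn - y₁ * a^(nn+1)) * y₂ * (a^nn * x^ν) := by
      rw [sp_id1, f1, f2, f3]
    rw [eW] at E1
    have hW3 : (a^nn - y₁ * a^(nn+1)) - α * y₂ * (a^nn * x^ν) ∈ M := by
      have e3 : (a^nn - y₁ * a^(nn+1)) - α * y₂ * (a^nn * x^ν)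
          = ((a^nn - y₁ * a^(nn+1)) - (a^nn - y₁ * a^(nn+1)) * y₂ * (a^nn * x^ν))
            + m₁ * (y₂ * (a^nn * x^ν)) := by
        rw [hαeq]; exact sp_id2 _ _ _ _ _ _
      rw [e3]
      exact add_mem E1 (M.mul_mem_right _ _ hm₁)
    obtain ⟨s, hs⟩ := hLk nn y₂
    have hs2 := M.mul_mem_right _ (x ^ ν) hs
    have e4 : (α * y₂ * a ^ nn - α * s * a ^ (nn + nn)) * x ^ ν
        = α * y₂ * (a ^ nn * x ^ ν) - α * s * a ^ (nn+1) := by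
      have e5 : (α * y₂ * a ^ nn - α * s * a ^ (nn + nn)) * x ^ ν
          = α * y₂ * (a ^ nn * x ^ ν) - α * s * (a ^ (nn + nn) * x ^ ν) := by
        noncomm_ring
      rw [e5, f4]
    rw [e4] at hs2
    have hfin : a ^ nn - (y₁ + α * s) * a ^ (nn + 1) ∈ M := by
      have e6 : a ^ nn - (y₁ + α * s) * a ^ (nn + 1)
          = ((a^nn - y₁ * a^(nn+1)) - α * y₂ * (a^nn * x^ν))
            + (α * y₂ * (a ^ nn * x ^ ν) - α * s * a ^ (nn+1)) := by noncomm_ring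
      rw [e6]
      exact add_mem hW3 hs2
    exact hM ⟨y₁ + α * s, hfin⟩
  -- apply the hypothesis to the prime M
  obtain ⟨k, D, instD, f, hf⟩ := h M hMne hMpr
  letI : DivisionRing D := instD
  set φ : R →+* Matrix (Fin k) (Fin k) D := f.comp (RingCon.mk' M.ringCon) with hφ
  have hb : (φ a) ^ n = (φ a) ^ (n+1) * (φ x) := by
    have := congrArg φ ha
    simpa [map_pow, map_mul] using this
  obtain ⟨z, hz⟩ := sp_matrix_left_of_right (φ a) (φ x) n hb
  set b := φ a
  set cc := φ x
  have hbc : b ^ n * cc = z * b ^ n := by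
    calc b ^ n * cc = z * (b ^ (n+1) * cc) := by rw [hz, mul_assoc]
      _ = z * b ^ n := by rw [← hb]
  have hcj : ∀ j : ℕ, b ^ n * cc ^ j = z ^ j * b ^ n := by
    intro j
    induction j with
    | zero => simp
    | succ j ih =>
        calc b ^ n * cc ^ (j+1) = (b ^ n * cc ^ j) * cc := by rw [pow_succ, mul_assoc]
          _ = z ^ j * (b ^ n * cc) := by rw [ih, mul_assoc]
          _ = z ^ j * (z * b ^ n) := by rw [hbc]
          _ = z ^ (j+1) * b ^ n := by rw [pow_succ z j, mul_assoc]
  have hzj : ∀ j : ℕ, b ^ n = z ^ j * b ^ (n + j) := by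
    intro j
    induction j with
    | zero => simp
    | succ j ih =>
        calc b ^ n = z ^ j * b ^ (n + j) := ih
          _ = z ^ j * (b ^ n * b ^ j) := by rw [pow_add]
          _ = z ^ j * (z * b ^ (n+1) * b ^ j) := by rw [hz]
          _ = z ^ (j+1) * b ^ (n + (j+1)) := by
              rw [pow_succ z j, show n + (j+1) = (n+1) + j by omega, pow_add b (n+1) j]
              noncomm_ring
  have key : b ^ n * cc ^ (n+1) * b ^ (n+1) = b ^ n := by
    rw [hcj (n+1), mul_assoc, ← pow_add]
    exact (hzj (n+1)).symm
  have himg : φ (a^n * x^(n+1) * a^(n+1)) = φ (a^n) := by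
    simp only [map_mul, map_pow]
    exact key
  have hq : (RingCon.mk' M.ringCon) (a^n * x^(n+1) * a^(n+1))
      = (RingCon.mk' M.ringCon) (a^n) := by
    apply hf
    simpa [hφ] using himg
  have hrel : M.ringCon (a^n * x^(n+1) * a^(n+1)) (a^n) := (RingCon.eq M.ringCon).mp hq
  have hmem : a^n * x^(n+1) * a^(n+1) - a^n ∈ M := (M.rel_iff _ _).mp hrel
  refine hM ⟨a^n * x^(n+1), ?_⟩
  have h9 := neg_mem hmem
  rw [neg_sub] at h9
  exact h9
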